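/- If π_p is injective, then its image π_p(V^N) equals the polydiagonal subspace {X ∈ V^n : X_{σ_i} = X_{σ_j} whenever σ_i(p) = σ_j(p)}, and this subspace is invariant under Γ_f for every f : V^n → V. -/
import Mathlib


/-- The regular-representation maps `A_σ` on `V^n = (Σ → V)`. -/
def Amap {M : Type*} [Monoid M] {V : Type*} (m : M) : (M → V) → (M → V) :=
  fun X => fun j => X (j * m)

/-- The fundamental network vector field `Γ_f` on `V^n`: `(Γ_f)_σ = f ∘ A_σ`. -/
def GammaF {M : Type*} [Monoid M] {V : Type*} (f : (M → V) → V) :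
    (M → V) → (M → V) :=
  fun X => fun m => f (Amap m X)

/-- The map `π_p : V^N → V^n`, `(π_p x)_σ = x_{σ(p)}`. -/
def piP {M : Type*} [Monoid M] {N : ℕ} {V : Type*}
    (φ : M →* Function.End (Fin N)) (p : Fin N) : (Fin N → V) → (M → V) :=
  fun x => fun j => x (φ j p)

/-- if `π_p` is injective then its image equals the polydiagonal
`{X : X_{σᵢ} = X_{σⱼ} whenever σᵢ(p) = σⱼ(p)}`, and this subspace is invariant
under `Γ_f` for every `f`. -/
theorem range_piP_polydiagonal {M : Type*} [Monoid M] [Fintype M] {N : ℕ}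
    {V : Type*} [AddCommGroup V] [Module ℝ V]
    (φ : M →* Function.End (Fin N)) (p : Fin N)
    (hinj : Function.Injective (piP (V := V) φ p)) :
    Set.range (piP (V := V) φ p) =
      {X : M → V | ∀ i j : M, φ i p = φ j p → X i = X j} ∧
    ∀ (f : (M → V) → V), ∀ X ∈ {X : M → V | ∀ i j : M, φ i p = φ j p → X i = X j},
      GammaF f X ∈ {X : M → V | ∀ i j : M, φ i p = φ j p → X i = X j} := by
  constructor
  · ext X
    constructor
    · rintro ⟨x, rfl⟩ i j hij
      simp [piP, hij]
    · intro hX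
      classical
      refine ⟨fun q => if h : ∃ j : M, φ j p = q then X h.choose else 0, ?_⟩
      funext j
      have h : ∃ k : M, φ k p = φ j p := ⟨j, rfl⟩
      simp only [piP, dif_pos h]
      exact hX h.choose j h.choose_spec
  · intro f X hX i j hij
    have : Amap i X = Amap j X := by
      funext k
      apply hX
      have h1 : φ (k * i) = φ k * φ i := φ.map_mul k i
      have h2 : φ (k * j) = φ k * φ j := φ.map_mul k j
      show φ (k * i) p = φ (k * j) p
      rw [h1, h2]
      show φ k (φ i p) = φ k (φ j p)
      rw [hij]
    simp [GammaF, this]
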